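/- Let T be a rooted tree with leaf label set Λ(T), let X be a cluster of Λ(T), and let r_X be the lowest common ancestor in T of the leaves in X. For any node v of T, the cluster Λ(T[v]) of leaf descendants of v is incompatible with X if and only if (1) v is a proper descendant of r_X lying on a path from a child of r_X to some leaf in X, and (2) Λ(T[v]) is not a subset of X. -/

import Mathlib

/-- Two clusters are compatible if one contains the other or they are disjoint. -/
def Compatible {α : Type*} [DecidableEq α] (C D : Finset α) : Prop :=
  C ⊆ D ∨ D ⊆ C ∨ C ∩ D = ∅

/-- Rooted, unordered (modelled as ordered), leaf-labelled trees. -/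
inductive PTree (α : Type) where
  | leaf : α → PTree α
  | node : List (PTree α) → PTree α

/-- The set of leaf labels of a tree. -/
def PTree.leaves {α : Type} [DecidableEq α] : PTree α → Finset α
  | .leaf a => {a}
  | .node ts => ts.attach.foldr (fun t acc => PTree.leaves t.1 ∪ acc) ∅
decreasing_by
  have := List.sizeOf_lt_of_mem t.2
  simp only [PTree.node.sizeOf_spec] at *
  omega

/-- The list of children of the root of a tree. -/
def PTree.children {α : Type} : PTree α → List (PTree α)
  | .leaf _ => []
  | .node ts => ts

/-- A phylogenetic tree: every internal node has at least two children and
all leaves carry distinct labels (sibling subtrees have disjoint leaf sets). -/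
inductive PTree.WF {α : Type} [DecidableEq α] : PTree α → Prop
  | leaf (a : α) : PTree.WF (.leaf a)
  | node (ts : List (PTree α)) :
      2 ≤ ts.length →
      ts.Pairwise (fun s t => Disjoint s.leaves t.leaves) →
      (∀ t ∈ ts, PTree.WF t) →
      PTree.WF (.node ts)

/-- `IsSubtree u t` holds when `u` is (the subtree rooted at) a node of `t`. -/
inductive PTree.IsSubtree {α : Type} : PTree α → PTree α → Prop
  | refl (t : PTree α) : PTree.IsSubtree t t
  | step (u t : PTree α) (ts : List (PTree α)) :
      PTree.IsSubtree u t → t ∈ ts → PTree.IsSubtree u (.node ts)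

/-- `r` is the lowest common ancestor in `T` of the leaves labelled by `X`:
`r` is a node of `T` whose leaf set contains `X`, below every node of `T`
whose leaf set contains `X`. -/
def PTree.IsLCA {α : Type} [DecidableEq α] (T : PTree α) (X : Finset α) (r : PTree α) : Prop :=
  r.IsSubtree T ∧ X ⊆ r.leaves ∧ ∀ s : PTree α, s.IsSubtree T → X ⊆ s.leaves → r.IsSubtree s

theorem PTree.leaves_node {α : Type} [DecidableEq α] (ts : List (PTree α)) :
    (PTree.node ts).leaves = ts.foldr (fun t acc => t.leaves ∪ acc) ∅ := by
  rw [PTree.leaves]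
  exact List.foldr_attach (f := fun (t : PTree α) (acc : Finset α) => t.leaves ∪ acc)

theorem PTree.mem_leaves_node {α : Type} [DecidableEq α] {a : α} {ts : List (PTree α)} :
    a ∈ (PTree.node ts).leaves ↔ ∃ t ∈ ts, a ∈ t.leaves := by
  rw [PTree.leaves_node]
  induction ts with
  | nil => simp
  | cons t ts ih => simp [ih]

theorem PTree.IsSubtree.leaves_subset {α : Type} [DecidableEq α] {u t : PTree α}
    (h : u.IsSubtree t) : u.leaves ⊆ t.leaves := by
  induction h with
  | refl => exact fun _ h => h
  | step t ts h ht ih =>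
      intro a ha
      exact PTree.mem_leaves_node.2 ⟨t, ht, ih ha⟩

theorem PTree.IsSubtree.trans {α : Type} {u v w : PTree α}
    (h1 : u.IsSubtree v) (h2 : v.IsSubtree w) : u.IsSubtree w := by
  induction h2 with
  | refl => exact h1
  | step t ts h ht ih => exact .step _ _ _ ih ht

theorem PTree.IsSubtree.sizeOf_le {α : Type} {u t : PTree α}
    (h : u.IsSubtree t) : sizeOf u ≤ sizeOf t := by
  induction h with
  | refl => exact le_refl _
  | step t ts h ht ih =>
      have := List.sizeOf_lt_of_mem ht
      simp only [PTree.node.sizeOf_spec]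
      omega

theorem PTree.IsSubtree.antisymm {α : Type} {u t : PTree α}
    (h1 : u.IsSubtree t) (h2 : t.IsSubtree u) : u = t := by
  cases h1 with
  | refl => rfl
  | step s ts h hs =>
      have h3 := h.sizeOf_le
      have h4 := h2.sizeOf_le
      have h5 := List.sizeOf_lt_of_mem hs
      simp only [PTree.node.sizeOf_spec] at h4
      omega

/-- Clusters of nodes of a well-formed tree form a laminar family. -/
theorem PTree.laminar {α : Type} [DecidableEq α] {T : PTree α} (hT : T.WF) :
    ∀ u v : PTree α, u.IsSubtree T → v.IsSubtree T →
      u.IsSubtree v ∨ v.IsSubtree u ∨ Disjoint u.leaves v.leaves := by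
  induction hT with
  | leaf a =>
      intro u v hu hv
      cases hu with
      | refl =>
          cases hv with
          | refl => exact .inl (.refl _)
  | node ts h2 hdisj hwf ih =>
      intro u v hu hv
      cases hu with
      | refl => exact .inr (.inl hv)
      | step s ts hus hs =>
          cases hv with
          | refl => exact .inl (.step _ _ _ hus hs)
          | step s' ts hvs' hs' =>
              by_cases hss : s = s'
              · subst hss
                exact ih s hs u v hus hvs'
              · refine .inr (.inr ?_)
                have hd : Disjoint s.leaves s'.leaves :=
                  by
                    haveI : Std.Symm (fun s t : PTree α => Disjoint s.leaves t.leaves) := ⟨fun a b h => h.symm⟩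
                    exact hdisj.forall hs hs' hss
                exact hd.mono hus.leaves_subset hvs'.leaves_subset

/-- Lemma 5 of the paper: for a node `v` of `T`, the cluster `Λ(T[v])` is
incompatible with `X` if and only if (1) `v` is a proper descendant of
`r_X = lca_T(X)` having a leaf descendant in `X` (i.e. `v` lies on a path from a
child of `r_X` to some leaf in `X`), and (2) `Λ(T[v]) ⊄ X`. -/
theorem incompatible_iff_on_path {α : Type} [DecidableEq α]
    (T : PTree α) (hT : T.WF) (X : Finset α) (hX : X ⊆ T.leaves) (hXne : X.Nonempty)
    (r : PTree α) (hr : T.IsLCA X r)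
    (v : PTree α) (hv : v.IsSubtree T) :
    ¬ Compatible X v.leaves ↔
      ((v.IsSubtree r ∧ v ≠ r ∧ (v.leaves ∩ X).Nonempty) ∧ ¬ v.leaves ⊆ X) := by
  obtain ⟨hrT, hXr, hmin⟩ := hr
  unfold Compatible
  push_neg
  constructor
  · rintro ⟨hXv, hvX, hne⟩
    have hiv : (v.leaves ∩ X).Nonempty := by
      rw [Finset.inter_comm]
      exact hne
    obtain ⟨a, ha⟩ := hiv
    have haX : a ∈ X := (Finset.mem_inter.1 ha).2
    have hav : a ∈ v.leaves := (Finset.mem_inter.1 ha).1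
    have har : a ∈ r.leaves := hXr haX
    rcases PTree.laminar hT v r hv hrT with hvr | hrv | hd
    · refine ⟨⟨hvr, ?_, ⟨a, ha⟩⟩, hvX⟩
      rintro rfl
      exact hXv hXr
    · exact absurd (fun b hb => hrv.leaves_subset (hXr hb)) hXv
    · exact absurd har (Finset.disjoint_left.1 hd hav)
  · rintro ⟨⟨hvr, hvne, hiv⟩, hvX⟩
    refine ⟨?_, hvX, ?_⟩
    · intro hXv
      have := hmin v hv hXv
      exact hvne (this.antisymm hvr).symm
    · rw [Finset.inter_comm]
      exact hiv
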